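/- Let M be a finite-dimensional F-vector space of dimension d, and let φ_M : M → M be an additive map which is semilinear over the Frobenius of F (φ_M(λ·x) = λ^p·φ_M(x) for λ ∈ F, x ∈ M) and such that the F-span of φ_M(M) is all of M (M is an étale φ-module). Then there exists a free k[[u]]-submodule 𝔐 ⊆ M of rank d which spans M over F, satisfies φ_M(𝔐) ⊆ 𝔐, and for which there exists an integer N ≥ 0 with u^N·𝔐 contained in the k[[u]]-submodule generated by φ_M(𝔐). (This is the key step in Proposition 5.4 of the paper: every étale φ-module over k((u)) contains a lattice which is a Kisin module of finite height.) -/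

import Mathlib

/-!
Statement 14 (key step in Proposition 5.4 of Caruso–Liu): every étale `φ`-module over
`F = k((u))` contains a `k[[u]]`-lattice which is a Kisin module of finite height:
a free `k[[u]]`-submodule `𝔐` of rank `d` spanning `M` over `F`, stable under `φ_M`,
and with `u^N·𝔐` contained in the `k[[u]]`-span of `φ_M(𝔐)` for some `N`.
-/

theorem exists_kisin_lattice_of_etale
    (p : ℕ) [hp : Fact p.Prime] (k : Type*) [Field k] [CharP k p] [PerfectRing k p]
    (M : Type*) [AddCommGroup M] [Module (LaurentSeries k) M]
    [FiniteDimensional (LaurentSeries k) M]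
    (d : ℕ) (hd : Module.finrank (LaurentSeries k) M = d)
    (φM : M →+ M)
    (hsemi : ∀ (lam : LaurentSeries k) (x : M), φM (lam • x) = (lam ^ p) • φM x)
    (hetale : Submodule.span (LaurentSeries k) (Set.range φM) = ⊤) :
    -- view `M` as a `k[[u]]`-module via the inclusion `k[[u]] ⊆ k((u))`
    letI : Module (PowerSeries k) M :=
      Module.compHom M (algebraMap (PowerSeries k) (LaurentSeries k))
    ∃ (𝔐 : Submodule (PowerSeries k) M) (_ : Module.Basis (Fin d) (PowerSeries k) 𝔐),
      Submodule.span (LaurentSeries k) (𝔐 : Set M) = ⊤ ∧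
      (∀ x ∈ 𝔐, φM x ∈ 𝔐) ∧
      ∃ N : ℕ, ∀ x ∈ 𝔐, ((PowerSeries.X : PowerSeries k) ^ N) • x ∈
        Submodule.span (PowerSeries k) (φM '' (𝔐 : Set M)) := by
  letI _instR : Module (PowerSeries k) M :=
    Module.compHom M (algebraMap (PowerSeries k) (LaurentSeries k))
  set R := PowerSeries k with hRdef
  set F := LaurentSeries k with hFdef
  haveI : IsScalarTower R F M := by
    constructor
    intro r f x
    show (algebraMap R F r • f) • x = algebraMap R F r • (f • x)
    rw [smul_eq_mul, mul_smul]
  have halg : Function.Injective (algebraMap R F) := by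
    rw [LaurentSeries.coe_algebraMap]; exact HahnSeries.ofPowerSeries_injective
  set u : F := algebraMap R F PowerSeries.X with hudef
  have hu : ∀ (n : ℕ) (y : M), (u ^ n) • y = ((PowerSeries.X : R) ^ n) • y := by
    intro n y
    rw [hudef, ← map_pow, algebraMap_smul]
  have hune : u ≠ 0 := by
    rw [hudef]
    intro h
    exact PowerSeries.X_ne_zero (halg (by rw [h, map_zero]))
  have b : Module.Basis (Fin d) F M := Module.finBasisOfFinrankEq F M hd
  -- the images of the basis vectors under φM span M over F, hence form a basis
  have hspanc : Submodule.span F (Set.range fun i => φM (b i)) = ⊤ := by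
    rw [← top_le_iff, ← hetale, Submodule.span_le]
    rintro _ ⟨x, rfl⟩
    have hx : φM x = ∑ i, (b.repr x i ^ p) • φM (b i) := by
      conv_lhs => rw [← b.sum_repr x]
      rw [map_sum]
      exact Finset.sum_congr rfl fun i _ => hsemi _ _
    rw [hx]
    exact Submodule.sum_mem _ fun i _ =>
      Submodule.smul_mem _ _ (Submodule.subset_span ⟨i, rfl⟩)
  have hcard : Fintype.card (Fin d) = Module.finrank F M := by simp [hd]; exact hd.symm
  set c : Module.Basis (Fin d) F M :=
    basisOfTopLeSpanOfCardEqFinrank (fun i => φM (b i)) hspanc.ge hcard with hcdef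
  have hc_eq : ∀ i, c i = φM (b i) := fun i => by
    rw [hcdef, coe_basisOfTopLeSpanOfCardEqFinrank]
  -- clearing denominators
  obtain ⟨⟨_, a, rfl⟩, hca⟩ := IsLocalization.exist_integer_multiples
    (Submonoid.powers (PowerSeries.X : R)) Finset.univ
    (fun ij : Fin d × Fin d => b.repr (φM (b ij.1)) ij.2)
  obtain ⟨⟨_, m, rfl⟩, hcm⟩ := IsLocalization.exist_integer_multiples
    (Submonoid.powers (PowerSeries.X : R)) Finset.univ
    (fun ij : Fin d × Fin d => c.repr (b ij.1) ij.2)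
  -- a general lemma for putting multiples in spans
  have key : ∀ (n : ℕ) (g : Fin d → F) (v : Fin d → M) (x : M),
      (∑ i, g i • v i) = x →
      (∀ i, IsLocalization.IsInteger R (((PowerSeries.X : R) ^ n) • g i)) →
      ((PowerSeries.X : R) ^ n) • x ∈ Submodule.span R (Set.range v) := by
    intro n g v x hx hint
    subst hx
    rw [Finset.smul_sum]
    refine Submodule.sum_mem _ fun i _ => ?_
    obtain ⟨f, hf⟩ := hint i
    rw [← smul_assoc, ← hf, algebraMap_smul]
    exact Submodule.smul_mem _ f (Submodule.subset_span ⟨i, rfl⟩)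
  have hcX : ∀ i, ((PowerSeries.X : R) ^ a) • φM (b i) ∈
      Submodule.span R (Set.range b) := by
    intro i
    refine key a (fun j => b.repr (φM (b i)) j) b _ (b.sum_repr _) fun j => ?_
    exact hca (i, j) (Finset.mem_univ _)
  have hmX : ∀ j, ((PowerSeries.X : R) ^ m) • b j ∈
      Submodule.span R (Set.range fun i => φM (b i)) := by
    intro j
    refine key m (fun i => c.repr (b j) i) (fun i => φM (b i)) _ ?_ fun i => ?_
    · conv_rhs => rw [← c.sum_repr (b j)]
      exact Finset.sum_congr rfl fun i _ => by rw [hc_eq]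
    · exact hcm (j, i) (Finset.mem_univ _)
  -- the lattice
  set w : Fin d → M := fun i => ((PowerSeries.X : R) ^ a) • b i with hwdef
  set 𝔐 : Submodule R M := Submodule.span R (Set.range w) with h𝔐
  have hwu : ∀ i, w i = (u ^ a) • b i := fun i => (hu a (b i)).symm
  -- w is linearly independent over F, hence over R
  have hwF : LinearIndependent F w := by
    have hx : u ^ a ≠ 0 := pow_ne_zero _ hune
    have hwe : w = fun i => (LinearEquiv.smulOfNeZero F M (u ^ a) hx).toLinearMap (b i) := by
      funext i
      rw [hwu i]
      rfl
    rw [hwe]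
    exact b.linearIndependent.map' _ (LinearMap.ker_eq_bot.mpr (LinearEquiv.injective _))
  have hwR : LinearIndependent R w := by
    refine hwF.restrict_scalars ?_
    intro r s h
    apply halg
    simpa [Algebra.smul_def] using h
  -- φM maps w into a sufficiently positive region
  have hp2 : 2 ≤ p := hp.out.two_le
  have h2a : 2 * a ≤ a * p := by
    calc 2 * a = a * 2 := by ring
    _ ≤ a * p := Nat.mul_le_mul_left a hp2
  have hφw : ∀ i, φM (w i) = ((PowerSeries.X : R) ^ (a * p)) • φM (b i) := by
    intro i
    rw [hwu i, hsemi, ← pow_mul, hu]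
  have hmapw : ∀ y ∈ Submodule.span R (Set.range b),
      ((PowerSeries.X : R) ^ a) • y ∈ 𝔐 := by
    intro y hy
    induction hy using Submodule.span_induction with
    | mem y hy =>
        obtain ⟨i, rfl⟩ := hy
        exact Submodule.subset_span ⟨i, rfl⟩
    | zero => simp
    | add y z _ _ hy hz => rw [smul_add]; exact add_mem hy hz
    | smul r y _ hy => rw [smul_smul, mul_comm, ← smul_smul]; exact Submodule.smul_mem _ _ hy
  have hgen : ∀ i, φM (w i) ∈ 𝔐 := by
    intro i
    have hap : a * p = (a * p - 2 * a) + a + a := by omega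
    rw [hφw i, hap, pow_add, pow_add, mul_smul, mul_smul]
    exact Submodule.smul_mem _ _ (hmapw _ (hcX i))
  -- φ-stability
  have hstable : ∀ x ∈ 𝔐, φM x ∈ 𝔐 := by
    intro x hx
    induction hx using Submodule.span_induction with
    | mem y hy =>
        obtain ⟨i, rfl⟩ := hy
        exact hgen i
    | zero => rw [map_zero]; exact Submodule.zero_mem _
    | add y z _ _ hy hz => rw [map_add]; exact add_mem hy hz
    | smul r y _ hy =>
        have : φM (r • y) = (r ^ p) • φM y := by
          rw [show r • y = algebraMap R F r • y from (algebraMap_smul F r y).symm,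
            hsemi, ← map_pow, algebraMap_smul]
        rw [this]
        exact Submodule.smul_mem _ _ hy
  -- spanning over F
  have hspanF : Submodule.span F ((𝔐 : Set M)) = ⊤ := by
    rw [← top_le_iff, ← b.span_eq, Submodule.span_le]
    rintro _ ⟨i, rfl⟩
    have : b i = (u ^ a)⁻¹ • w i := by
      rw [hwu i, inv_smul_smul₀ (pow_ne_zero _ hune)]
    rw [this]
    exact Submodule.smul_mem _ _
      (Submodule.subset_span (Submodule.subset_span ⟨i, rfl⟩))
  -- finite height
  have hmapφ : ∀ y ∈ Submodule.span R (Set.range fun i => φM (b i)),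
      ((PowerSeries.X : R) ^ (a * p)) • y ∈ Submodule.span R (φM '' (𝔐 : Set M)) := by
    intro y hy
    induction hy using Submodule.span_induction with
    | mem y hy =>
        obtain ⟨i, rfl⟩ := hy
        rw [← hφw i]
        exact Submodule.subset_span ⟨w i, Submodule.subset_span ⟨i, rfl⟩, rfl⟩
    | zero => simp
    | add y z _ _ hy hz => rw [smul_add]; exact add_mem hy hz
    | smul r y _ hy => rw [smul_smul, mul_comm, ← smul_smul]; exact Submodule.smul_mem _ _ hy
  have hheight : ∀ x ∈ 𝔐, ((PowerSeries.X : R) ^ (a * p + m)) • x ∈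
      Submodule.span R (φM '' (𝔐 : Set M)) := by
    intro x hx
    induction hx using Submodule.span_induction with
    | mem y hy =>
        obtain ⟨j, rfl⟩ := hy
        have step1 : ((PowerSeries.X : R) ^ (a * p + m)) • b j ∈
            Submodule.span R (φM '' (𝔐 : Set M)) := by
          rw [pow_add, mul_smul]
          exact hmapφ _ (hmX j)
        have : ((PowerSeries.X : R) ^ (a * p + m)) • w j =
            ((PowerSeries.X : R) ^ a) • (((PowerSeries.X : R) ^ (a * p + m)) • b j) := by
          rw [hwdef]
          rw [smul_smul, smul_smul, mul_comm]
        rw [this]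
        exact Submodule.smul_mem _ _ step1
    | zero => simp
    | add y z _ _ hy hz => rw [smul_add]; exact add_mem hy hz
    | smul r y _ hy => rw [smul_smul, mul_comm, ← smul_smul]; exact Submodule.smul_mem _ _ hy
  exact ⟨𝔐, Module.Basis.span hwR, hspanF, hstable, a * p + m, hheight⟩
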